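/- Let (G,H) be dense and suppose u ∈ V(G) is not a cut vertex of G. Then either D⁺_{G,H}(u) contains two consecutive integers, or D⁺_{G,H}(u) equals the set of all odd integers in [0, d_G(u)], or D⁺_{G,H}(u) equals the set of all even integers in [0, d_G(u)]. -/

import Mathlib

/-- An orientation of a graph: each edge is assigned a source endpoint. -/
structure GOrientation {V : Type*} (G : SimpleGraph V) where
  src : Sym2 V → V
  mem : ∀ e ∈ G.edgeSet, src e ∈ e

/-- Out-degree of `v` under orientation `O`: number of edges whose source is `v`. -/
noncomputable def outDeg {V : Type*} {G : SimpleGraph V} (O : GOrientation G) (v : V) : ℕ :=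
  Set.ncard {e ∈ G.edgeSet | O.src e = v}

/-- Degree of a vertex. -/
noncomputable def deg {V : Type*} (G : SimpleGraph V) (v : V) : ℕ :=
  (G.neighborSet v).ncard

/-- The pair `(G, H)` is dense: `G` is connected and `i ∉ H v → i+1 ∈ H v`. -/
def DensePair {V : Type*} (G : SimpleGraph V) (H : V → Set ℕ) : Prop :=
  G.Connected ∧ ∀ v : V, ∀ i : ℕ, i ∉ H v → i + 1 ∈ H v

/-- `D⁺_{G,H}(u)`: possible out-degrees of `u` over orientations feasible away from `u`. -/
noncomputable def Dset {V : Type*} (G : SimpleGraph V) (H : V → Set ℕ) (u : V) : Set ℕ :=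
  {d | ∃ O : GOrientation G, (∀ x, x ≠ u → outDeg O x ∈ H x) ∧ outDeg O u = d}

/-- `x` is a cut vertex: `G` is connected but `G - x` is not. -/
def IsCutVertex {V : Type*} (G : SimpleGraph V) (x : V) : Prop :=
  G.Connected ∧ ¬ (G.induce ({x}ᶜ : Set V)).Connected


open scoped Classical
set_option linter.unusedSectionVars false
set_option maxHeartbeats 1000000

section Flip
variable {V : Type*} [Fintype V] {G : SimpleGraph V}

/-- flip one edge of an orientation -/
noncomputable def flipO (O : GOrientation G) (e₀ : Sym2 V) (he : e₀ ∈ G.edgeSet) :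
    GOrientation G where
  src e := if e = e₀ then Sym2.Mem.other (O.mem e₀ he) else O.src e
  mem e heE := by
    by_cases h : e = e₀
    · subst h
      simp only [if_pos rfl]
      exact Sym2.other_mem _
    · simpa [h] using O.mem e heE

lemma flip_src_eq (O : GOrientation G) (e₀ : Sym2 V) (he : e₀ ∈ G.edgeSet) :
    (flipO O e₀ he).src e₀ = Sym2.Mem.other (O.mem e₀ he) := by simp [flipO]

lemma flip_src_ne (O : GOrientation G) (e₀ : Sym2 V) (he : e₀ ∈ G.edgeSet)
    {e : Sym2 V} (h : e ≠ e₀) : (flipO O e₀ he).src e = O.src e := by simp [flipO, h]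

lemma outDeg_flip_of_ne (O : GOrientation G) (e₀ : Sym2 V) (he : e₀ ∈ G.edgeSet)
    {v : V} (hv1 : v ≠ O.src e₀) (hv2 : v ≠ Sym2.Mem.other (O.mem e₀ he)) :
    outDeg (flipO O e₀ he) v = outDeg O v := by
  unfold outDeg
  congr 1
  ext e
  by_cases h : e = e₀
  · subst h
    simp only [Set.mem_setOf_eq, flip_src_eq]
    exact ⟨fun ⟨h1, h2⟩ => absurd h2.symm hv2, fun ⟨h1, h2⟩ => absurd h2.symm hv1⟩
  · simp [flip_src_ne O e₀ he h]

lemma outDeg_flip_src (O : GOrientation G) (e₀ : Sym2 V) (he : e₀ ∈ G.edgeSet) :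
    outDeg (flipO O e₀ he) (O.src e₀) + 1 = outDeg O (O.src e₀) := by
  have hne : Sym2.Mem.other (O.mem e₀ he) ≠ O.src e₀ :=
    Sym2.other_ne (G.not_isDiag_of_mem_edgeSet he) (O.mem e₀ he)
  have hset : {e ∈ G.edgeSet | O.src e = O.src e₀}
      = insert e₀ {e ∈ G.edgeSet | (flipO O e₀ he).src e = O.src e₀} := by
    ext e
    by_cases h : e = e₀
    · subst h
      simp only [Set.mem_setOf_eq, Set.mem_insert_iff, flip_src_eq]
      tauto
    · simp only [Set.mem_setOf_eq, Set.mem_insert_iff, flip_src_ne O e₀ he h]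
      tauto
  have hnot : e₀ ∉ {e ∈ G.edgeSet | (flipO O e₀ he).src e = O.src e₀} := by
    simp only [Set.mem_setOf_eq, flip_src_eq]
    exact fun h => hne h.2
  unfold outDeg
  rw [hset, Set.ncard_insert_of_notMem hnot (Set.toFinite _)]

lemma outDeg_flip_other (O : GOrientation G) (e₀ : Sym2 V) (he : e₀ ∈ G.edgeSet) :
    outDeg (flipO O e₀ he) (Sym2.Mem.other (O.mem e₀ he)) = outDeg O (Sym2.Mem.other (O.mem e₀ he)) + 1 := by
  have hne : Sym2.Mem.other (O.mem e₀ he) ≠ O.src e₀ :=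
    Sym2.other_ne (G.not_isDiag_of_mem_edgeSet he) (O.mem e₀ he)
  have hset : {e ∈ G.edgeSet | (flipO O e₀ he).src e = Sym2.Mem.other (O.mem e₀ he)}
      = insert e₀ {e ∈ G.edgeSet | O.src e = Sym2.Mem.other (O.mem e₀ he)} := by
    ext e
    by_cases h : e = e₀
    · subst h
      simp only [Set.mem_setOf_eq, Set.mem_insert_iff, flip_src_eq]
      tauto
    · simp only [Set.mem_setOf_eq, Set.mem_insert_iff, flip_src_ne O e₀ he h]
      tauto
  have hnot : e₀ ∉ {e ∈ G.edgeSet | O.src e = Sym2.Mem.other (O.mem e₀ he)} := by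
    simp only [Set.mem_setOf_eq]
    exact fun h => hne.symm h.2
  unfold outDeg
  rw [hset, Set.ncard_insert_of_notMem hnot (Set.toFinite _)]

/-- Flipping the edge between adjacent `w, v`. -/
lemma flip_adj (O : GOrientation G) {w v : V} (h : G.Adj w v) :
    ∃ O' : GOrientation G,
      (∀ x, x ≠ w → x ≠ v → outDeg O' x = outDeg O x) ∧
      ((O.src s(w,v) = w ∧ outDeg O' w + 1 = outDeg O w ∧ outDeg O' v = outDeg O v + 1) ∨
       (O.src s(w,v) = v ∧ outDeg O' w = outDeg O w + 1 ∧ outDeg O' v + 1 = outDeg O v)) ∧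
      (∀ e, e ≠ s(w,v) → O'.src e = O.src e) := by
  have he : s(w,v) ∈ G.edgeSet := G.mem_edgeSet.2 h
  have hwv : w ≠ v := h.ne
  refine ⟨flipO O s(w,v) he, ?_, ?_, fun e hne => flip_src_ne O _ he hne⟩
  · intro x hxw hxv
    have hsrc : O.src s(w,v) ∈ s(w,v) := O.mem _ he
    have hoth : Sym2.Mem.other (O.mem s(w,v) he) ∈ s(w,v) := Sym2.other_mem _
    refine outDeg_flip_of_ne O _ he ?_ ?_
    · rcases Sym2.mem_iff.mp hsrc with h1 | h1 <;> rw [h1] <;> assumption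
    · rcases Sym2.mem_iff.mp hoth with h1 | h1 <;> rw [h1] <;> assumption
  · have hsrc : O.src s(w,v) ∈ s(w,v) := O.mem _ he
    have hoth : Sym2.Mem.other (O.mem s(w,v) he) ∈ s(w,v) := Sym2.other_mem _
    have hne : Sym2.Mem.other (O.mem s(w,v) he) ≠ O.src s(w,v) :=
      Sym2.other_ne (G.not_isDiag_of_mem_edgeSet he) (O.mem s(w,v) he)
    rcases Sym2.mem_iff.mp hsrc with h1 | h1
    · left
      have hothv : Sym2.Mem.other (O.mem s(w,v) he) = v := by
        rcases Sym2.mem_iff.mp hoth with h2 | h2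
        · exact absurd (h2.trans h1.symm) hne
        · exact h2
      refine ⟨h1, ?_, ?_⟩
      · have := outDeg_flip_src O s(w,v) he; rwa [h1] at this
      · have := outDeg_flip_other O s(w,v) he; rwa [hothv] at this
    · right
      have hothw : Sym2.Mem.other (O.mem s(w,v) he) = w := by
        rcases Sym2.mem_iff.mp hoth with h2 | h2
        · exact h2
        · exact absurd (h2.trans h1.symm) hne
      refine ⟨h1, ?_, ?_⟩
      · have := outDeg_flip_other O s(w,v) he; rwa [hothw] at this
      · have := outDeg_flip_src O s(w,v) he; rwa [h1] at this

end Flip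

section Lists
variable {α : Type*}

lemma chain_concat' {r : α → α → Prop} :
    ∀ (l : List α) (a c : α), List.Chain r a l → r (l.getLastD a) c →
      List.Chain r a (l ++ [c])
  | [], a, c, _, h2 => List.Chain.cons h2 List.Chain.nil
  | x :: l', a, c, h, h2 => by
    rw [List.Chain, List.chain_cons] at h
    exact List.Chain.cons h.1 (chain_concat' l' x c h.2 (by rwa [List.getLastD_cons] at h2))

end Lists

section Repair
variable {V : Type*} [Fintype V] {G : SimpleGraph V} {H : V → Set ℕ}

lemma dense_down {v : V} {d : ℕ} (hdense : ∀ v i, i ∉ H v → i + 1 ∈ H v)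
    (h : d + 1 ∉ H v) : d ∈ H v := by
  by_contra hc
  exact h (hdense v d hc)

/-- The key walk lemma: given a path `w :: l` avoiding `u` whose last vertex is adjacent
to `u`, we can repair the (only possibly infeasible) vertex `w`, passing all corrections
along the path, possibly dumping a final ±1 onto `u`. -/
lemma repair (hdense : ∀ v i, i ∉ H v → i + 1 ∈ H v) (u : V) :
    ∀ (l : List V) (w : V) (O : GOrientation G), w ≠ u → u ∉ w :: l → (w :: l).Nodup →
    List.Chain G.Adj w (l ++ [u]) →
    ∃ O' : GOrientation G,
      (∀ x, x ≠ u → (x = w ∨ outDeg O x ∈ H x) → outDeg O' x ∈ H x) ∧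
      (outDeg O' u = outDeg O u ∨
       (O.src s(l.getLastD w, u) = u ∧ outDeg O' u + 1 = outDeg O u) ∨
       (O.src s(l.getLastD w, u) = l.getLastD w ∧ outDeg O' u = outDeg O u + 1))
  | [], w, O, hwu, hul, hnd, hchain => by
    by_cases hw : outDeg O w ∈ H w
    · exact ⟨O, fun x hx h => by rcases h with rfl | h <;> assumption, Or.inl rfl⟩
    · rw [List.nil_append, List.Chain, List.chain_cons] at hchain
      have hadj : G.Adj w u := hchain.1
      obtain ⟨O', hother, hcases, hsrc⟩ := flip_adj O hadj
      rcases hcases with ⟨h1, h2, h3⟩ | ⟨h1, h2, h3⟩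
      · -- w loses one, u gains one
        refine ⟨O', ?_, Or.inr (Or.inr ⟨h1, h3⟩)⟩
        intro x hxu hx
        rcases hx with rfl | hx
        · -- new outdeg of x(=w) is old - 1, which is in H by density
          by_contra hc
          exact hw (h2 ▸ hdense x _ hc)
        · rcases eq_or_ne x w with rfl | hxw
          · by_contra hc
            exact hw (h2 ▸ hdense x _ hc)
          · rwa [hother x hxw hxu]
      · -- w gains one, u loses one
        refine ⟨O', ?_, Or.inr (Or.inl ⟨h1, h3⟩)⟩
        intro x hxu hx
        rcases hx with rfl | hx
        · rw [h2]
          exact hdense x _ hw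
        · rcases eq_or_ne x w with rfl | hxw
          · rw [h2]; exact hdense x _ hw
          · rwa [hother x hxw hxu]
  | v :: l', w, O, hwu, hul, hnd, hchain => by
    by_cases hw : outDeg O w ∈ H w
    · exact ⟨O, fun x hx h => by rcases h with rfl | h <;> assumption, Or.inl rfl⟩
    · rw [List.cons_append, List.Chain, List.chain_cons] at hchain
      have hadj : G.Adj w v := hchain.1
      have hvu : v ≠ u := by simp only [List.mem_cons] at hul; tauto
      have hwv : w ≠ v := hadj.ne
      have huv' : u ∉ v :: l' := by simp only [List.mem_cons] at hul ⊢; tauto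
      have hnd' : (v :: l').Nodup := hnd.of_cons
      obtain ⟨O₁, hother, hcases, hsrc⟩ := flip_adj O hadj
      -- in both cases w is now feasible
      have hwfix : outDeg O₁ w ∈ H w := by
        rcases hcases with ⟨h1, h2, h3⟩ | ⟨h1, h2, h3⟩
        · by_contra hc
          exact hw (h2 ▸ hdense w _ hc)
        · rw [h2]; exact hdense w _ hw
      obtain ⟨O₂, hfeas₂, hu₂⟩ := repair hdense u l' v O₁ hvu huv' hnd' hchain.2
      have hO₁u : outDeg O₁ u = outDeg O u := by
        refine hother u ?_ ?_ <;> simp only [List.mem_cons] at hul <;> tauto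
      have hlast : (v :: l').getLastD w = l'.getLastD v := List.getLastD_cons
      have hlastne : s(l'.getLastD v, u) ≠ s(w, v) := by
        intro hcontra
        have : u ∈ s(w, v) := hcontra ▸ Sym2.mem_mk_right _ _
        rcases Sym2.mem_iff.mp this with h | h
        · exact hwu h.symm
        · exact hvu h.symm
      have hsrclast : O₁.src s(l'.getLastD v, u) = O.src s(l'.getLastD v, u) :=
        hsrc _ hlastne
      refine ⟨O₂, ?_, ?_⟩
      · intro x hxu hx
        rcases hx with rfl | hx
        · exact hfeas₂ x hxu (Or.inr hwfix)
        · rcases eq_or_ne x v with rfl | hxv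
          · exact hfeas₂ x hxu (Or.inl rfl)
          · rcases eq_or_ne x w with rfl | hxw
            · exact hfeas₂ x hxu (Or.inr hwfix)
            · exact hfeas₂ x hxu (Or.inr (by rwa [hother x hxw hxv]))
      · rw [hlast]
        rcases hu₂ with h | ⟨h1, h2⟩ | ⟨h1, h2⟩
        · exact Or.inl (h.trans hO₁u)
        · exact Or.inr (Or.inl ⟨hsrclast ▸ h1, by omega⟩)
        · exact Or.inr (Or.inr ⟨hsrclast ▸ h1, by omega⟩)

end Repair

section Walks
variable {V : Type*} [Fintype V] {G : SimpleGraph V}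

lemma walk_support_getLastD {x y : V} (p : G.Walk x y) : ∀ d : V, p.support.getLastD d = y := by
  induction p with
  | nil => intro d; rfl
  | cons h p ih =>
    intro d
    rw [SimpleGraph.Walk.support_cons, List.getLastD_cons]
    exact ih _

lemma getLastD_eq_getLast {α : Type*} {l : List α} (h : l ≠ []) (d : α) :
    l.getLastD d = l.getLast h := by
  cases l with
  | nil => exact absurd rfl h
  | cons a t => rw [List.getLastD_cons, ← List.getLast_eq_getLastD]

/-- A simple path from `w` to `u` in `G`, packaged as a list for `repair`. -/
lemma exists_list_to (hconn : G.Connected) {u w : V} (hw : w ≠ u) :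
    ∃ l : List V, List.Chain G.Adj w (l ++ [u]) ∧ (w :: l).Nodup ∧ u ∉ w :: l := by
  obtain ⟨q⟩ := hconn w u
  let p := q.toPath
  have hnd : p.1.support.Nodup := p.2.support_nodup
  have hsupp : p.1.support = w :: p.1.support.tail := p.1.support_eq_cons
  have htail_ne : p.1.support.tail ≠ [] := by
    intro h
    have h1 := walk_support_getLastD p.1 w
    rw [hsupp, List.getLastD_cons, h] at h1
    exact hw h1
  have hlast : p.1.support.tail.getLast htail_ne = u := by
    have h1 := walk_support_getLastD p.1 w
    rw [hsupp, List.getLastD_cons, getLastD_eq_getLast htail_ne] at h1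
    exact h1
  have heq : p.1.support.tail.dropLast ++ [u] = p.1.support.tail := by
    conv_rhs => rw [← List.dropLast_append_getLast htail_ne]
    rw [hlast]
  have hsupp2 : p.1.support = (w :: p.1.support.tail.dropLast) ++ [u] := by
    rw [List.cons_append, heq]
    exact hsupp
  refine ⟨p.1.support.tail.dropLast, ?_, ?_, ?_⟩
  · rw [heq]
    have := SimpleGraph.Walk.isChain_adj_support p.1
    rw [hsupp] at this
    exact this
  · have hsub : List.Sublist (w :: p.1.support.tail.dropLast)
        ((w :: p.1.support.tail.dropLast) ++ [u]) := List.sublist_append_left _ _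
    rw [← hsupp2] at hsub
    exact hsub.nodup hnd
  · intro hmem
    rw [hsupp2] at hnd
    rcases List.nodup_append'.mp hnd with ⟨-, -, hdisj⟩
    exact hdisj hmem (by simp)
end Walks

section Walks2
variable {V : Type*} [Fintype V] {G : SimpleGraph V}

/-- A simple path from `a` to `b` avoiding `u`, packaged for `repair`. -/
lemma exists_list_avoid {u : V} (hG' : (G.induce ({u}ᶜ : Set V)).Connected)
    {a b : V} (ha : a ≠ u) (hb : b ≠ u) :
    ∃ l : List V, List.Chain G.Adj a l ∧ (a :: l).Nodup ∧ u ∉ a :: l ∧ l.getLastD a = b := by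
  have ha' : a ∈ ({u}ᶜ : Set V) := ha
  have hb' : b ∈ ({u}ᶜ : Set V) := hb
  obtain ⟨q⟩ := hG' ⟨a, ha'⟩ ⟨b, hb'⟩
  let p := q.toPath
  have hnd : p.1.support.Nodup := p.2.support_nodup
  have hsupp : p.1.support = ⟨a, ha'⟩ :: p.1.support.tail := p.1.support_eq_cons
  refine ⟨p.1.support.tail.map Subtype.val, ?_, ?_, ?_, ?_⟩
  · have hch : List.Chain (G.induce ({u}ᶜ : Set V)).Adj ⟨a, ha'⟩ p.1.support.tail := by
      have := SimpleGraph.Walk.isChain_adj_support p.1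
      rw [hsupp] at this
      exact this
    exact List.isChain_map_of_isChain Subtype.val (fun x y hxy => hxy) hch
  · have : a :: p.1.support.tail.map Subtype.val = p.1.support.map Subtype.val := by
      rw [hsupp]; rfl
    rw [this]
    exact hnd.map Subtype.val_injective
  · intro hmem
    rcases List.mem_cons.mp hmem with h | h
    · exact ha h.symm
    · rcases List.mem_map.mp h with ⟨⟨x, hx⟩, -, hxe⟩
      exact hx (hxe ▸ rfl)
  · have h1 : p.1.support.getLastD ⟨a, ha'⟩ = ⟨b, hb'⟩ := walk_support_getLastD p.1 _
    have h2 := List.getLastD_map (f := Subtype.val (p := (· ∈ ({u}ᶜ : Set V))))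
      (l := p.1.support) (a := ⟨a, ha'⟩)
    rw [h1] at h2
    rw [hsupp, List.map_cons, List.getLastD_cons] at h2
    exact h2
end Walks2

section Counting
variable {V : Type*} [Fintype V] {G : SimpleGraph V}

lemma ncard_incidence (u : V) :
    {e | e ∈ G.edgeSet ∧ u ∈ e}.ncard = deg G u := by
  classical
  have hins : ∀ e ∈ {e | e ∈ G.edgeSet ∧ u ∈ e}, (fun e : Sym2 V =>
      if h : u ∈ e then Sym2.Mem.other h else u) e ∈ G.neighborSet u := by
    rintro e ⟨heE, heu⟩
    simp only [dif_pos heu]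
    have h1 : s(u, Sym2.Mem.other heu) = e := Sym2.other_spec heu
    have : s(u, Sym2.Mem.other heu) ∈ G.edgeSet := h1.symm ▸ heE
    exact G.mem_edgeSet.1 this
  have hinj : Set.InjOn (fun e : Sym2 V => if h : u ∈ e then Sym2.Mem.other h else u)
      {e | e ∈ G.edgeSet ∧ u ∈ e} := by
    rintro e₁ ⟨he₁, hu₁⟩ e₂ ⟨he₂, hu₂⟩ heq
    simp only [dif_pos hu₁, dif_pos hu₂] at heq
    rw [← Sym2.other_spec hu₁, ← Sym2.other_spec hu₂, heq]
  have himg : (fun e : Sym2 V => if h : u ∈ e then Sym2.Mem.other h else u) ''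
      {e | e ∈ G.edgeSet ∧ u ∈ e} = G.neighborSet u := by
    apply Set.Subset.antisymm
    · rintro v ⟨e, he, rfl⟩
      exact hins e he
    · intro v hv
      refine ⟨s(u, v), ⟨G.mem_edgeSet.2 hv, Sym2.mem_mk_left _ _⟩, ?_⟩
      have hu : u ∈ s(u, v) := Sym2.mem_mk_left _ _
      simp only [dif_pos hu]
      have hne : Sym2.Mem.other hu ≠ u :=
        Sym2.other_ne (by simp [Sym2.mk_isDiag_iff]; exact (G.ne_of_adj hv)) hu
      rcases Sym2.mem_iff.mp (Sym2.other_mem hu) with h | h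
      · exact absurd h hne
      · exact h
  rw [deg, ← himg, Set.ncard_image_of_injOn hinj]

lemma outDeg_le_deg (O : GOrientation G) (u : V) : outDeg O u ≤ deg G u := by
  rw [← ncard_incidence (G := G) u]
  apply Set.ncard_le_ncard _ (Set.toFinite _)
  rintro e ⟨heE, hsrc⟩
  exact ⟨heE, hsrc ▸ O.mem e heE⟩

lemma ncard_inedges (O : GOrientation G) (u : V) :
    {e | e ∈ G.edgeSet ∧ u ∈ e ∧ O.src e ≠ u}.ncard = deg G u - outDeg O u := by
  have hsub : {e | e ∈ G.edgeSet ∧ O.src e = u} ⊆ {e | e ∈ G.edgeSet ∧ u ∈ e} := by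
    rintro e ⟨heE, hsrc⟩
    exact ⟨heE, hsrc ▸ O.mem e heE⟩
  have hdiff : {e | e ∈ G.edgeSet ∧ u ∈ e ∧ O.src e ≠ u}
      = {e | e ∈ G.edgeSet ∧ u ∈ e} \ {e | e ∈ G.edgeSet ∧ O.src e = u} := by
    ext e
    simp only [Set.mem_setOf_eq, Set.mem_diff]
    tauto
  rw [hdiff, Set.ncard_diff hsub (Set.toFinite _), ncard_incidence]
  rfl

end Counting

section Main
variable {V : Type*} [Fintype V] {G : SimpleGraph V} {H : V → Set ℕ}

/-- some orientation always exists -/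
noncomputable def defaultO (G : SimpleGraph V) : GOrientation G where
  src e := e.out.1
  mem e _ := Sym2.out_fst_mem e

/-- Existence: some orientation feasible away from `u`. -/
lemma exists_feasible (hconn : G.Connected) (hdense : ∀ v i, i ∉ H v → i + 1 ∈ H v) (u : V) :
    ∃ O : GOrientation G, ∀ x, x ≠ u → outDeg O x ∈ H x := by
  classical
  suffices h : ∀ (n : ℕ) (O : GOrientation G),
      {x | x ≠ u ∧ outDeg O x ∉ H x}.ncard ≤ n → ∃ O' : GOrientation G,
      ∀ x, x ≠ u → outDeg O' x ∈ H x by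
    exact h _ (defaultO G) le_rfl
  intro n
  induction n with
  | zero =>
    intro O hO
    refine ⟨O, fun x hx => ?_⟩
    by_contra hc
    have hmem : x ∈ {x | x ≠ u ∧ outDeg O x ∉ H x} := ⟨hx, hc⟩
    have hemp : {x | x ≠ u ∧ outDeg O x ∉ H x} = ∅ :=
      (Set.ncard_eq_zero (Set.toFinite _)).1 (Nat.le_zero.1 hO)
    rw [hemp] at hmem
    exact hmem
  | succ n ih =>
    intro O hO
    by_cases h0 : {x | x ≠ u ∧ outDeg O x ∉ H x} = ∅
    · refine ⟨O, fun x hx => ?_⟩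
      by_contra hc
      have hmem : x ∈ {x | x ≠ u ∧ outDeg O x ∉ H x} := ⟨hx, hc⟩
      rw [h0] at hmem
      exact hmem
    · obtain ⟨w, hwu, hwbad⟩ := Set.nonempty_iff_ne_empty.2 h0
      obtain ⟨l, hchain, hnd, hul⟩ := exists_list_to hconn hwu
      obtain ⟨O', hfeas, -⟩ := repair hdense u l w O hwu hul hnd hchain
      apply ih O'
      have hsub : {x | x ≠ u ∧ outDeg O' x ∉ H x} ⊆ {x | x ≠ u ∧ outDeg O x ∉ H x} \ {w} := by
        rintro x ⟨hxu, hxbad⟩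
        rcases eq_or_ne x w with rfl | hxw
        · exact absurd (hfeas x hxu (Or.inl rfl)) hxbad
        · refine ⟨⟨hxu, fun hgood => hxbad (hfeas x hxu (Or.inr hgood))⟩, hxw⟩
      calc {x | x ≠ u ∧ outDeg O' x ∉ H x}.ncard
          ≤ ({x | x ≠ u ∧ outDeg O x ∉ H x} \ {w}).ncard :=
            Set.ncard_le_ncard hsub (Set.toFinite _)
        _ ≤ n := by
            have := Set.ncard_diff_singleton_add_one (s := {x | x ≠ u ∧ outDeg O x ∉ H x})
              ⟨hwu, hwbad⟩ (Set.toFinite _)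
            omega

lemma mem_Dset {u : V} {d : ℕ} : d ∈ Dset G H u ↔
    ∃ O : GOrientation G, (∀ x, x ≠ u → outDeg O x ∈ H x) ∧ outDeg O u = d := Iff.rfl

lemma stepDown {u : V} (hG' : (G.induce ({u}ᶜ : Set V)).Connected)
    (hdense : ∀ v i, i ∉ H v → i + 1 ∈ H v) {d : ℕ}
    (hd2 : d + 2 ∈ Dset G H u) : d + 1 ∈ Dset G H u ∨ d ∈ Dset G H u := by
  obtain ⟨O, hfeas, hval⟩ := mem_Dset.1 hd2
  have hS : {e | e ∈ G.edgeSet ∧ O.src e = u}.ncard = d + 2 := hval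
  have h2lt : 1 < {e | e ∈ G.edgeSet ∧ O.src e = u}.ncard := by omega
  obtain ⟨e₁, he₁S, e₂, he₂S, he12⟩ := (Set.one_lt_ncard (Set.toFinite _)).1 h2lt
  obtain ⟨he₁, hsrc₁⟩ := he₁S
  obtain ⟨he₂, hsrc₂⟩ := he₂S
  have hu₁ : u ∈ e₁ := hsrc₁ ▸ O.mem e₁ he₁
  have hu₂ : u ∈ e₂ := hsrc₂ ▸ O.mem e₂ he₂
  set a := Sym2.Mem.other hu₁ with ha_def
  set b := Sym2.Mem.other hu₂ with hb_def
  have hspec₁ : s(u, a) = e₁ := Sym2.other_spec hu₁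
  have hspec₂ : s(u, b) = e₂ := Sym2.other_spec hu₂
  have ha : a ≠ u := Sym2.other_ne (G.not_isDiag_of_mem_edgeSet he₁) hu₁
  have hb : b ≠ u := Sym2.other_ne (G.not_isDiag_of_mem_edgeSet he₂) hu₂
  have hab : a ≠ b := by
    intro h
    rw [← hspec₁, ← hspec₂, h] at he12
    exact he12 rfl
  have hadj_a : G.Adj u a := G.mem_edgeSet.1 (hspec₁ ▸ he₁)
  have hadj_b : G.Adj u b := G.mem_edgeSet.1 (hspec₂ ▸ he₂)
  have hsrc_ua : O.src s(u, a) = u := by rw [hspec₁]; exact hsrc₁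
  have hsrc_ub : O.src s(u, b) = u := by rw [hspec₂]; exact hsrc₂
  obtain ⟨O₁, hother, hcases, hsrcpres⟩ := flip_adj O hadj_a
  rcases hcases with ⟨h1, h2, h3⟩ | ⟨h1, -, -⟩
  swap
  · rw [hsrc_ua] at h1; exact absurd h1.symm ha
  obtain ⟨l, hchain, hnd, hul, hgl⟩ := exists_list_avoid hG' ha hb
  have hchain' : List.Chain G.Adj a (l ++ [u]) :=
    chain_concat' l a u hchain (by rw [hgl]; exact hadj_b.symm)
  obtain ⟨O₂, hfeas₂, hu₂'⟩ := repair hdense u l a O₁ ha hul hnd hchain'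
  have hO₁u : outDeg O₁ u = d + 1 := by omega
  have hfeasO₂ : ∀ x, x ≠ u → outDeg O₂ x ∈ H x := by
    intro x hxu
    rcases eq_or_ne x a with h | hxa
    · exact hfeas₂ x hxu (Or.inl h)
    · exact hfeas₂ x hxu (Or.inr (by rw [hother x hxu hxa]; exact hfeas x hxu))
  have hbu_ne : s(b, u) ≠ s(u, a) := by
    intro hcontra
    rw [Sym2.eq_iff] at hcontra
    rcases hcontra with ⟨h1', h2'⟩ | ⟨h1', h2'⟩
    · exact hb h1'
    · exact hab h1'.symm
  have hsrc_bu : O₁.src s(b, u) = u := by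
    rw [hsrcpres _ hbu_ne, Sym2.eq_swap]
    exact hsrc_ub
  rw [hgl] at hu₂'
  rcases hu₂' with h | ⟨-, hm⟩ | ⟨hcond, -⟩
  · exact Or.inl (mem_Dset.2 ⟨O₂, hfeasO₂, by omega⟩)
  · exact Or.inr (mem_Dset.2 ⟨O₂, hfeasO₂, by omega⟩)
  · rw [hsrc_bu] at hcond
    exact absurd hcond.symm hb

lemma stepUp {u : V} (hG' : (G.induce ({u}ᶜ : Set V)).Connected)
    (hdense : ∀ v i, i ∉ H v → i + 1 ∈ H v) {d : ℕ}
    (hd : d ∈ Dset G H u) (hdeg : d + 2 ≤ deg G u) :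
    d + 1 ∈ Dset G H u ∨ d + 2 ∈ Dset G H u := by
  obtain ⟨O, hfeas, hval⟩ := mem_Dset.1 hd
  have hS : {e | e ∈ G.edgeSet ∧ u ∈ e ∧ O.src e ≠ u}.ncard = deg G u - d :=
    hval ▸ ncard_inedges O u
  have h2lt : 1 < {e | e ∈ G.edgeSet ∧ u ∈ e ∧ O.src e ≠ u}.ncard := by omega
  obtain ⟨e₁, he₁S, e₂, he₂S, he12⟩ := (Set.one_lt_ncard (Set.toFinite _)).1 h2lt
  obtain ⟨he₁, hu₁, hsrc₁⟩ := he₁S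
  obtain ⟨he₂, hu₂, hsrc₂⟩ := he₂S
  set a := Sym2.Mem.other hu₁ with ha_def
  set b := Sym2.Mem.other hu₂ with hb_def
  have hspec₁ : s(u, a) = e₁ := Sym2.other_spec hu₁
  have hspec₂ : s(u, b) = e₂ := Sym2.other_spec hu₂
  have ha : a ≠ u := Sym2.other_ne (G.not_isDiag_of_mem_edgeSet he₁) hu₁
  have hb : b ≠ u := Sym2.other_ne (G.not_isDiag_of_mem_edgeSet he₂) hu₂
  have hab : a ≠ b := by
    intro h
    rw [← hspec₁, ← hspec₂, h] at he12
    exact he12 rfl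
  have hadj_a : G.Adj u a := G.mem_edgeSet.1 (hspec₁ ▸ he₁)
  have hadj_b : G.Adj u b := G.mem_edgeSet.1 (hspec₂ ▸ he₂)
  have hsrc_ua : O.src s(u, a) = a := by
    have hmem := O.mem e₁ he₁
    rw [← hspec₁] at hmem
    rcases Sym2.mem_iff.mp hmem with h | h
    · rw [hspec₁] at h
      exact absurd h hsrc₁
    · exact h
  have hsrc_ub : O.src s(u, b) = b := by
    have hmem := O.mem e₂ he₂
    rw [← hspec₂] at hmem
    rcases Sym2.mem_iff.mp hmem with h | h
    · rw [hspec₂] at h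
      exact absurd h hsrc₂
    · exact h
  obtain ⟨O₁, hother, hcases, hsrcpres⟩ := flip_adj O hadj_a
  rcases hcases with ⟨h1, -, -⟩ | ⟨h1, h2, h3⟩
  · rw [hsrc_ua] at h1; exact absurd h1 ha
  obtain ⟨l, hchain, hnd, hul, hgl⟩ := exists_list_avoid hG' ha hb
  have hchain' : List.Chain G.Adj a (l ++ [u]) :=
    chain_concat' l a u hchain (by rw [hgl]; exact hadj_b.symm)
  obtain ⟨O₂, hfeas₂, hu₂'⟩ := repair hdense u l a O₁ ha hul hnd hchain'
  have hO₁u : outDeg O₁ u = d + 1 := by omega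
  have hfeasO₂ : ∀ x, x ≠ u → outDeg O₂ x ∈ H x := by
    intro x hxu
    rcases eq_or_ne x a with h | hxa
    · exact hfeas₂ x hxu (Or.inl h)
    · exact hfeas₂ x hxu (Or.inr (by rw [hother x hxu hxa]; exact hfeas x hxu))
  have hbu_ne : s(b, u) ≠ s(u, a) := by
    intro hcontra
    rw [Sym2.eq_iff] at hcontra
    rcases hcontra with ⟨h1', h2'⟩ | ⟨h1', h2'⟩
    · exact hb h1'
    · exact hab h1'.symm
  have hsrc_bu : O₁.src s(b, u) = b := by
    rw [hsrcpres _ hbu_ne, Sym2.eq_swap]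
    exact hsrc_ub
  rw [hgl] at hu₂'
  rcases hu₂' with h | ⟨hcond, -⟩ | ⟨-, hp⟩
  · exact Or.inl (mem_Dset.2 ⟨O₂, hfeasO₂, by omega⟩)
  · rw [hsrc_bu] at hcond
    exact absurd hcond hb
  · exact Or.inr (mem_Dset.2 ⟨O₂, hfeasO₂, by omega⟩)

end Main

theorem stmt5 {V : Type*} [Fintype V] (G : SimpleGraph V) (H : V → Set ℕ)
    (hd : DensePair G H) (u : V) (hu : ¬ IsCutVertex G u) :
    (∃ i, i ∈ Dset G H u ∧ i + 1 ∈ Dset G H u) ∨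
    Dset G H u = {i | i ≤ deg G u ∧ Odd i} ∨
    Dset G H u = {i | i ≤ deg G u ∧ Even i} := by
  classical
  obtain ⟨hconn, hdense⟩ := hd
  by_cases hcons : ∃ i, i ∈ Dset G H u ∧ i + 1 ∈ Dset G H u
  · exact Or.inl hcons
  push_neg at hcons
  have hG' : (G.induce ({u}ᶜ : Set V)).Connected := by
    by_contra h
    exact hu ⟨hconn, h⟩
  obtain ⟨O₀, hO₀⟩ := exists_feasible hconn hdense u
  set d₀ := outDeg O₀ u with hd₀
  have hd₀mem : d₀ ∈ Dset G H u := ⟨O₀, hO₀, rfl⟩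
  have down : ∀ d, d + 2 ∈ Dset G H u → d ∈ Dset G H u := by
    intro d hdm
    rcases stepDown hG' hdense hdm with h | h
    · exact absurd hdm (hcons (d + 1) h)
    · exact h
  have up : ∀ d, d ∈ Dset G H u → d + 2 ≤ deg G u → d + 2 ∈ Dset G H u := by
    intro d hdm hle
    rcases stepUp hG' hdense hdm hle with h | h
    · exact absurd h (hcons d hdm)
    · exact h
  have down2 : ∀ d, d ∈ Dset G H u → d % 2 ∈ Dset G H u := by
    intro d
    induction d using Nat.strong_induction_on with
    | _ d ih =>
      intro hdm
      rcases lt_or_ge d 2 with h | h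
      · rwa [Nat.mod_eq_of_lt h]
      · have h2 : d - 2 + 2 = d := by omega
        have hmem2 : d - 2 ∈ Dset G H u := down (d - 2) (by rwa [h2])
        have hmem3 := ih (d - 2) (by omega) hmem2
        have heq : (d - 2) % 2 = d % 2 := by omega
        rwa [heq] at hmem3
  have hpar : ∀ d, d ∈ Dset G H u → d % 2 = d₀ % 2 := by
    intro d hdm
    by_contra hne
    have h1 := down2 d hdm
    have h2 := down2 d₀ hd₀mem
    have h0 : (0 : ℕ) ∈ Dset G H u ∧ (1 : ℕ) ∈ Dset G H u := by
      rcases Nat.mod_two_eq_zero_or_one d with hd2 | hd2 <;>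
        rcases Nat.mod_two_eq_zero_or_one d₀ with hd02 | hd02
      · exact absurd (hd2.trans hd02.symm) hne
      · exact ⟨hd2 ▸ h1, hd02 ▸ h2⟩
      · exact ⟨hd02 ▸ h2, hd2 ▸ h1⟩
      · exact absurd (hd2.trans hd02.symm) hne
    exact hcons 0 h0.1 h0.2
  have hle : ∀ d, d ∈ Dset G H u → d ≤ deg G u := by
    rintro d ⟨O, -, hv⟩
    exact hv ▸ outDeg_le_deg O u
  have hclimb : ∀ k, d₀ % 2 + 2 * k ≤ deg G u → d₀ % 2 + 2 * k ∈ Dset G H u := by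
    intro k
    induction k with
    | zero => intro _; simpa using down2 d₀ hd₀mem
    | succ k ih2 =>
      intro hk2
      have h2 := ih2 (by omega)
      have h3 := up _ h2 (by omega)
      have heq : d₀ % 2 + 2 * (k + 1) = d₀ % 2 + 2 * k + 2 := by omega
      rwa [heq]
  have hall : ∀ i, i ≤ deg G u → i % 2 = d₀ % 2 → i ∈ Dset G H u := by
    intro i hi hpar2
    obtain ⟨k, hk⟩ : ∃ k, i = d₀ % 2 + 2 * k := ⟨i / 2, by omega⟩
    rw [hk]
    exact hclimb k (by omega)
  rcases Nat.mod_two_eq_zero_or_one d₀ with hp | hp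
  · right; right
    ext i
    simp only [Set.mem_setOf_eq]
    constructor
    · intro him
      refine ⟨hle i him, Nat.even_iff.2 ?_⟩
      have := hpar i him
      omega
    · rintro ⟨h1, h2⟩
      exact hall i h1 (by have := Nat.even_iff.1 h2; omega)
  · right; left
    ext i
    simp only [Set.mem_setOf_eq]
    constructor
    · intro him
      refine ⟨hle i him, Nat.odd_iff.2 ?_⟩
      have := hpar i him
      omega
    · rintro ⟨h1, h2⟩
      exact hall i h1 (by have := Nat.odd_iff.1 h2; omega)
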